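/- Let R be a coherent ring such that every exact complex of injective left R-modules has all of its cycles Ding injective. Then every exact complex of flat right R-modules is F-totally acyclic. -/

import Mathlib

/-!
Definitions for formalizing "Acyclic complexes and Gorenstein rings"
(Estrada, Iacob, Zolt).
-/

open CategoryTheory Opposite

universe u
noncomputable section
namespace AcyclicGorenstein

/-! ### Complexes of modules -/

section Complexes
variable (T : Type u) [Ring T]

/-- Unbounded chain complexes of left `T`-modules. -/
abbrev Cx := ChainComplex (ModuleCat.{u} T) ℤ

/-- A complex is exact (acyclic) if it has zero homology in every degree. -/
def IsExactCx (C : Cx T) : Prop := ∀ n : ℤ, Function.Exact (C.d (n+1) n) (C.d n (n-1))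

/-- The `n`-th cycle module `Z_n C = ker (d : C_n → C_{n-1})` of a complex. -/
def cycleMod (C : Cx T) (n : ℤ) : ModuleCat.{u} T :=
  ModuleCat.of T (LinearMap.ker (C.d n (n-1)).hom)

/-- `M` is (isomorphic to) a cycle of the complex `C`. -/
def IsCycleOf (C : Cx T) (M : ModuleCat.{u} T) : Prop :=
  ∃ n : ℤ, Nonempty (M ≃ₗ[T] LinearMap.ker (C.d n (n-1)).hom)

/-- All cycles of `C` belong to the class `P`. -/
def cyclesIn (P : ModuleCat.{u} T → Prop) (C : Cx T) : Prop := ∀ n : ℤ, P (cycleMod T C n)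

/-- All components of `C` belong to the class `P`, i.e. `C ∈ dw(P)`. -/
def dwIn (P : ModuleCat.{u} T → Prop) (C : Cx T) : Prop := ∀ n : ℤ, P (C.X n)

/-- A chain map is null-homotopic. -/
def NullHomotopic {V W : Cx T} (f : V ⟶ W) : Prop := Nonempty (Homotopy f 0)

/-- Exactness of the complex `Hom(E, C)`: every map `E → Z_n C` lifts along `d`. -/
def homIntoExact (E : ModuleCat.{u} T) (C : Cx T) : Prop :=
  ∀ (n : ℤ) (f : E →ₗ[T] C.X n), (C.d n (n-1)).hom ∘ₗ f = 0 →
    ∃ g : E →ₗ[T] C.X (n+1), (C.d (n+1) n).hom ∘ₗ g = f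

/-- Exactness of the complex `Hom(C, Q)`. -/
def homOutExact (C : Cx T) (Q : ModuleCat.{u} T) : Prop :=
  ∀ (n : ℤ) (f : C.X n →ₗ[T] Q), f ∘ₗ (C.d (n+1) n).hom = 0 →
    ∃ g : C.X (n-1) →ₗ[T] Q, g ∘ₗ (C.d n (n-1)).hom = f

end Complexes

/-! ### Ext, orthogonal classes, cotorsion pairs -/

section Ext
variable (T : Type u) [Ring T]

/-- Vanishing of `Ext^n_T(A, B)` (Ext in the abelian category of `T`-modules). -/
def extVanish (n : ℕ) (A B : ModuleCat.{u} T) : Prop :=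
  Subsingleton (((Ext ℤ (ModuleCat.{u} T) n).obj (op A)).obj B)

/-- The right `Ext^1`-orthogonal class `A^⊥`. -/
def rightOrth (A : ModuleCat.{u} T → Prop) : ModuleCat.{u} T → Prop :=
  fun M => ∀ X, A X → extVanish T 1 X M

/-- The left `Ext^1`-orthogonal class `^⊥B`. -/
def leftOrth (B : ModuleCat.{u} T → Prop) : ModuleCat.{u} T → Prop :=
  fun M => ∀ Y, B Y → extVanish T 1 M Y

/-- `(A, B)` is a cotorsion pair: `B = A^⊥` and `A = ^⊥B`. -/
def IsCotorsionPair (A B : ModuleCat.{u} T → Prop) : Prop :=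
  (∀ M, B M ↔ rightOrth T A M) ∧ (∀ M, A M ↔ leftOrth T B M)

/-- A hereditary pair: `Ext^i(A, B) = 0` for all `A ∈ A`, `B ∈ B`, `i ≥ 1`. -/
def HereditaryPair (A B : ModuleCat.{u} T → Prop) : Prop :=
  ∀ i : ℕ, 1 ≤ i → ∀ X Y, A X → B Y → extVanish T i X Y

/-- A short exact sequence `0 → M₁ → M₂ → M₃ → 0` presented by linear maps. -/
def IsSES {M₁ M₂ M₃ : ModuleCat.{u} T} (i : M₁ →ₗ[T] M₂) (p : M₂ →ₗ[T] M₃) : Prop :=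
  Function.Injective i ∧ Function.Surjective p ∧ Function.Exact i p

/-- Completeness of a cotorsion pair: every module has special approximations on both sides. -/
def CompletePair (A B : ModuleCat.{u} T → Prop) : Prop :=
  ∀ M : ModuleCat.{u} T,
    (∃ (B' A' : ModuleCat.{u} T) (i : M →ₗ[T] B') (p : B' →ₗ[T] A'),
        B B' ∧ A A' ∧ IsSES T i p) ∧
    (∃ (B' A' : ModuleCat.{u} T) (i : B' →ₗ[T] A') (p : A' →ₗ[T] M),
        B B' ∧ A A' ∧ IsSES T i p)

/-- dg-condition for a complex `W` with components in `P`, tested against chain maps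
into `W` from exact complexes with cycles in `Ort`. -/
def dgInto (P Ort : ModuleCat.{u} T → Prop) (W : Cx T) : Prop :=
  dwIn T P W ∧ ∀ V : Cx T, IsExactCx T V → cyclesIn T Ort V →
    ∀ f : V ⟶ W, NullHomotopic T f

/-- dg-condition for a complex `Y` with components in `P`, tested against chain maps
from `Y` to exact complexes with cycles in `Ort`. -/
def dgOut (P Ort : ModuleCat.{u} T → Prop) (Y : Cx T) : Prop :=
  dwIn T P Y ∧ ∀ U : Cx T, IsExactCx T U → cyclesIn T Ort U →
    ∀ f : Y ⟶ U, NullHomotopic T f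

end Ext

/-! ### Classes of modules defined by complexes of injectives/projectives -/

section Classes
variable (T : Type u) [Ring T]

/-- An FP-injective (absolutely pure) module: `Ext^1(F, A) = 0` for every finitely
presented `F`. -/
def FPInj (A : ModuleCat.{u} T) : Prop :=
  ∀ F : ModuleCat.{u} T, Module.FinitePresentation T F → extVanish T 1 F A

/-- A module of type `FP∞`: it has a projective resolution by finitely generated
(projective) modules. -/
def TypeFPInfty (F : ModuleCat.{u} T) : Prop :=
  ∃ (P : ℕ → ModuleCat.{u} T) (d : ∀ i, P (i+1) →ₗ[T] P i) (ε : P 0 →ₗ[T] F),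
    (∀ i, Module.Finite T (P i)) ∧ (∀ i, Projective (P i)) ∧
    Function.Surjective ε ∧ Function.Exact (d 0) ε ∧
    ∀ i, Function.Exact (d (i+1)) (d i)

/-- An absolutely clean module: `Ext^1(F, A) = 0` for every module `F` of type `FP∞`. -/
def AbsClean (A : ModuleCat.{u} T) : Prop :=
  ∀ F : ModuleCat.{u} T, TypeFPInfty T F → extVanish T 1 F A

/-- A totally acyclic complex of injectives: an exact complex of injective modules that
stays exact under `Hom(E, -)` for every injective `E`. -/
def TotAcyclicInjCx (C : Cx T) : Prop :=
  dwIn T (fun M => Injective M) C ∧ IsExactCx T C ∧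
    ∀ E : ModuleCat.{u} T, Injective E → homIntoExact T E C

/-- A Gorenstein injective module: a cycle of a totally acyclic complex of injectives. -/
def GorInj (M : ModuleCat.{u} T) : Prop :=
  ∃ C : Cx T, TotAcyclicInjCx T C ∧ IsCycleOf T C M

/-- An exact complex of injectives remaining exact under `Hom(A, -)` for all
FP-injective `A`. -/
def DingInjCx (C : Cx T) : Prop :=
  dwIn T (fun M => Injective M) C ∧ IsExactCx T C ∧
    ∀ A : ModuleCat.{u} T, FPInj T A → homIntoExact T A C

/-- A Ding injective module. -/
def DingInj (M : ModuleCat.{u} T) : Prop :=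
  ∃ C : Cx T, DingInjCx T C ∧ IsCycleOf T C M

/-- An exact complex of injectives remaining exact under `Hom(A, -)` for all
absolutely clean `A`. -/
def GorACInjCx (C : Cx T) : Prop :=
  dwIn T (fun M => Injective M) C ∧ IsExactCx T C ∧
    ∀ A : ModuleCat.{u} T, AbsClean T A → homIntoExact T A C

/-- A Gorenstein AC-injective module. -/
def GorACInj (M : ModuleCat.{u} T) : Prop :=
  ∃ C : Cx T, GorACInjCx T C ∧ IsCycleOf T C M

/-- A totally acyclic complex of projectives: an exact complex of projective modules that
stays exact under `Hom(-, Q)` for every projective `Q`. -/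
def TotAcyclicProjCx (C : Cx T) : Prop :=
  dwIn T (fun M => Projective M) C ∧ IsExactCx T C ∧
    ∀ Q : ModuleCat.{u} T, Projective Q → homOutExact T C Q

/-- A (possibly infinite) exact left resolution of `M` by modules in the class `P`:
`⋯ → D_1 → D_0 → M → 0`. -/
def ExactLeftRes (P : ModuleCat.{u} T → Prop) (M : ModuleCat.{u} T) : Prop :=
  ∃ (D : ℕ → ModuleCat.{u} T) (d : ∀ i, D (i+1) →ₗ[T] D i) (ε : D 0 →ₗ[T] M),
    (∀ i, P (D i)) ∧ Function.Surjective ε ∧ Function.Exact (d 0) ε ∧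
    ∀ i, Function.Exact (d (i+1)) (d i)

/-- Left resolution dimension at most `n` by modules in the class `P`: there is an exact
sequence `0 → D_n → ⋯ → D_0 → M → 0` with all `D_i ∈ P`. -/
def ResDimLe (P : ModuleCat.{u} T → Prop) (M : ModuleCat.{u} T) (n : ℕ) : Prop :=
  ∃ (D : ℕ → ModuleCat.{u} T) (d : ∀ i, D (i+1) →ₗ[T] D i) (ε : D 0 →ₗ[T] M),
    (∀ i, P (D i)) ∧ (∀ i, n < i → Subsingleton (D i)) ∧
    Function.Surjective ε ∧ Function.Exact (d 0) ε ∧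
    ∀ i, Function.Exact (d (i+1)) (d i)

/-- Right resolution (coresolution) dimension at most `n` by modules in the class `P`:
there is an exact sequence `0 → M → D^0 → ⋯ → D^n → 0` with all `D^i ∈ P`. -/
def CoresDimLe (P : ModuleCat.{u} T → Prop) (M : ModuleCat.{u} T) (n : ℕ) : Prop :=
  ∃ (D : ℕ → ModuleCat.{u} T) (ε : M →ₗ[T] D 0) (d : ∀ i, D i →ₗ[T] D (i+1)),
    (∀ i, P (D i)) ∧ (∀ i, n < i → Subsingleton (D i)) ∧
    Function.Injective ε ∧ Function.Exact ε (d 0) ∧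
    ∀ i, Function.Exact (d i) (d (i+1))

/-- Projective dimension at most `n`. -/
def projDimLe (M : ModuleCat.{u} T) (n : ℕ) : Prop :=
  ResDimLe T (fun Q => Projective Q) M n

/-- Injective dimension at most `n`. -/
def injDimLe (M : ModuleCat.{u} T) (n : ℕ) : Prop :=
  CoresDimLe T (fun E => Injective E) M n

end Classes

/-! ### Tensor products over a (noncommutative) ring, flatness, character modules -/

section Tensor
variable (S : Type u) [Ring S]
variable (M : Type u) [AddCommGroup M] [Module Sᵐᵒᵖ M] (N : Type u) [AddCommGroup N] [Module S N]

/-- Defining relations of the balanced tensor product `M ⊗_S N` of a right `S`-module `M`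
and a left `S`-module `N`. -/
def trel : Set (TensorProduct ℤ M N) :=
  {x | ∃ (r : S) (m : M) (n : N), x = (MulOpposite.op r • m) ⊗ₜ[ℤ] n - m ⊗ₜ[ℤ] (r • n)}

/-- The balanced tensor product `M ⊗_S N` of a right `S`-module and a left `S`-module. -/
def Tens : Type u := TensorProduct ℤ M N ⧸ Submodule.span ℤ (trel S M N)

instance : AddCommGroup (Tens S M N) :=
  inferInstanceAs (AddCommGroup (TensorProduct ℤ M N ⧸ Submodule.span ℤ (trel S M N)))

variable {S M N}
variable {M' : Type u} [AddCommGroup M'] [Module Sᵐᵒᵖ M']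
variable {N' : Type u} [AddCommGroup N'] [Module S N']

/-- Functoriality of the balanced tensor product in the first variable. -/
def tmapL (f : M →ₗ[Sᵐᵒᵖ] M') (N : Type u) [AddCommGroup N] [Module S N] :
    Tens S M N →ₗ[ℤ] Tens S M' N :=
  Submodule.mapQ _ _ (TensorProduct.map f.toAddMonoidHom.toIntLinearMap LinearMap.id) (by
    rw [Submodule.span_le]
    rintro x ⟨r, m, n, rfl⟩
    refine Submodule.mem_comap.2 (Submodule.subset_span ⟨r, f m, n, ?_⟩)
    erw [map_sub, TensorProduct.map_tmul, TensorProduct.map_tmul]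
    simp [map_smul])

/-- Functoriality of the balanced tensor product in the second variable. -/
def tmapR (M : Type u) [AddCommGroup M] [Module Sᵐᵒᵖ M] (g : N →ₗ[S] N') :
    Tens S M N →ₗ[ℤ] Tens S M N' :=
  Submodule.mapQ _ _ (TensorProduct.map LinearMap.id g.toAddMonoidHom.toIntLinearMap) (by
    rw [Submodule.span_le]
    rintro x ⟨r, m, n, rfl⟩
    refine Submodule.mem_comap.2 (Submodule.subset_span ⟨r, m, g n, ?_⟩)
    erw [map_sub, TensorProduct.map_tmul, TensorProduct.map_tmul]
    simp [map_smul])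

end Tensor

section Char
variable (S : Type u) [Ring S] (M : Type u) [AddCommGroup M]

/-- The character group `M⁺ = Hom_ℤ(M, ℚ/ℤ)`. -/
def CharMod : Type u := M →+ AddCircle (1 : ℚ)

instance : FunLike (CharMod M) M (AddCircle (1 : ℚ)) where
  coe c := c.toFun
  coe_injective _ _ h := AddMonoidHom.ext (congrFun h)

instance : LinearMapClass (CharMod M) ℤ M (AddCircle (1 : ℚ)) where
  map_add f x y := AddMonoidHom.map_add (f : M →+ AddCircle (1 : ℚ)) x y
  map_smulₛₗ f n x := by
    rw [RingHom.id_apply]; exact AddMonoidHom.map_zsmul (f : M →+ AddCircle (1 : ℚ)) n x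

instance : AddCommGroup (CharMod M) := inferInstanceAs (AddCommGroup (M →+ _))

variable {M}

lemma CharMod.ext {f g : CharMod M} (h : ∀ m, f m = g m) : f = g := DFunLike.ext _ _ h

variable (M) [Module S M]

/-- The right `S`-action on the character module of a left `S`-module. -/
instance : SMul Sᵐᵒᵖ (CharMod M) :=
  ⟨fun s f => (f : M →+ AddCircle (1:ℚ)).comp (DistribMulAction.toAddMonoidHom M s.unop)⟩

variable {M}

lemma charSmul_apply (s : Sᵐᵒᵖ) (f : CharMod M) (m : M) :
    (s • f : CharMod M) m = f (s.unop • m) := rfl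

instance : Module Sᵐᵒᵖ (CharMod M) where
  one_smul f := CharMod.ext fun m => by rw [charSmul_apply]; simp
  mul_smul x y f := CharMod.ext fun m => by
    simp only [charSmul_apply, MulOpposite.unop_mul, mul_smul]
  smul_zero s := rfl
  smul_add s f g := rfl
  add_smul x y f := CharMod.ext fun m => by
    show f ((x + y).unop • m) = (x • f) m + (y • f) m
    rw [MulOpposite.unop_add, add_smul, map_add]; rfl
  zero_smul f := CharMod.ext fun m => by
    show f ((0 : Sᵐᵒᵖ).unop • m) = (0 : CharMod M) m
    simp only [MulOpposite.unop_zero, zero_smul]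
    show f 0 = (0 : M →+ AddCircle (1:ℚ)) m
    simp

/-- The character module `M⁺` of a left `S`-module, as a right `S`-module. -/
def charM (A : ModuleCat.{u} S) : ModuleCat.{u} Sᵐᵒᵖ := ModuleCat.of Sᵐᵒᵖ (CharMod A)

end Char

/-! ### F-total acyclicity, flat / Gorenstein flat / PGF modules (both sides) -/

section Sides
variable (S : Type u) [Ring S]

/-- Exactness of `C ⊗_S N` for a complex `C` of right `S`-modules and `N` a left
`S`-module. -/
def tensExactR (C : Cx Sᵐᵒᵖ) (N : ModuleCat.{u} S) : Prop :=
  ∀ n : ℤ, Function.Exact (tmapL (C.d (n+1) n).hom N) (tmapL (C.d n (n-1)).hom N)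

/-- Exactness of `M ⊗_S C` for a right `S`-module `M` and a complex `C` of left
`S`-modules. -/
def tensExactL (M : ModuleCat.{u} Sᵐᵒᵖ) (C : Cx S) : Prop :=
  ∀ n : ℤ, Function.Exact (tmapR M (C.d (n+1) n).hom) (tmapR M (C.d n (n-1)).hom)

/-- A flat right `S`-module: tensoring with it preserves injections of left modules. -/
def FlatRight (M : ModuleCat.{u} Sᵐᵒᵖ) : Prop :=
  ∀ (N N' : ModuleCat.{u} S) (g : N →ₗ[S] N'),
    Function.Injective g → Function.Injective (tmapR M g)

/-- A flat left `S`-module: tensoring with it preserves injections of right modules. -/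
def FlatLeft (N : ModuleCat.{u} S) : Prop :=
  ∀ (M M' : ModuleCat.{u} Sᵐᵒᵖ) (f : M →ₗ[Sᵐᵒᵖ] M'),
    Function.Injective f → Function.Injective (tmapL f N)

/-- An F-totally acyclic complex of right `S`-modules: exact, and `C ⊗ I` is exact for
every injective left `S`-module `I`. -/
def FTotAcyclicR (C : Cx Sᵐᵒᵖ) : Prop :=
  IsExactCx Sᵐᵒᵖ C ∧ ∀ I : ModuleCat.{u} S, Injective I → tensExactR S C I

/-- An F-totally acyclic complex of left `S`-modules: exact, and `I ⊗ C` is exact for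
every injective right `S`-module `I`. -/
def FTotAcyclicL (C : Cx S) : Prop :=
  IsExactCx S C ∧ ∀ I : ModuleCat.{u} Sᵐᵒᵖ, Injective I → tensExactL S I C

/-- A Gorenstein flat right `S`-module: a cycle of an F-totally acyclic complex of flat
right modules. -/
def GFlatR (M : ModuleCat.{u} Sᵐᵒᵖ) : Prop :=
  ∃ C : Cx Sᵐᵒᵖ, dwIn Sᵐᵒᵖ (FlatRight S) C ∧ FTotAcyclicR S C ∧ IsCycleOf Sᵐᵒᵖ C M

/-- A Gorenstein flat left `S`-module. -/
def GFlatL (M : ModuleCat.{u} S) : Prop :=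
  ∃ C : Cx S, dwIn S (FlatLeft S) C ∧ FTotAcyclicL S C ∧ IsCycleOf S C M

/-- A Gorenstein cotorsion right `S`-module: `Ext^1(G, -)` vanishes on it for every
Gorenstein flat `G`. -/
def GorCotR (Y : ModuleCat.{u} Sᵐᵒᵖ) : Prop :=
  ∀ G : ModuleCat.{u} Sᵐᵒᵖ, GFlatR S G → extVanish Sᵐᵒᵖ 1 G Y

/-- A Gorenstein cotorsion left `S`-module. -/
def GorCotL (Y : ModuleCat.{u} S) : Prop :=
  ∀ G : ModuleCat.{u} S, GFlatL S G → extVanish S 1 G Y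

/-- An exact complex of projective left modules which stays exact when tensored with any
injective right module. -/
def PGFCxL (C : Cx S) : Prop :=
  dwIn S (fun Q => Projective Q) C ∧ IsExactCx S C ∧
    ∀ I : ModuleCat.{u} Sᵐᵒᵖ, Injective I → tensExactL S I C

/-- A projectively coresolved Gorenstein flat left `S`-module. -/
def PGFL (M : ModuleCat.{u} S) : Prop := ∃ C : Cx S, PGFCxL S C ∧ IsCycleOf S C M

/-- An exact complex of projective right modules which stays exact when tensored with any
injective left module. -/
def PGFCxR (C : Cx Sᵐᵒᵖ) : Prop :=
  dwIn Sᵐᵒᵖ (fun Q => Projective Q) C ∧ IsExactCx Sᵐᵒᵖ C ∧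
    ∀ I : ModuleCat.{u} S, Injective I → tensExactR S C I

/-- A projectively coresolved Gorenstein flat right `S`-module. -/
def PGFR (M : ModuleCat.{u} Sᵐᵒᵖ) : Prop := ∃ C : Cx Sᵐᵒᵖ, PGFCxR S C ∧ IsCycleOf Sᵐᵒᵖ C M

/-- `S` is a coherent ring: finitely generated one-sided ideals (on either side) are
finitely presented. -/
def IsCoherentRing : Prop :=
  (∀ I : Submodule S S, I.FG → Module.FinitePresentation S I) ∧
  (∀ I : Submodule Sᵐᵒᵖ Sᵐᵒᵖ, I.FG → Module.FinitePresentation Sᵐᵒᵖ I)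

/-- `S` is left `n`-perfect: every flat left `S`-module has projective dimension ≤ `n`. -/
def LeftNPerfect (n : ℕ) : Prop :=
  ∀ M : ModuleCat.{u} S, FlatLeft S M → projDimLe S M n

/-- `S` is an Iwanaga–Gorenstein ring: two-sided noetherian with finite self-injective
dimension on both sides. -/
def IwanagaGorenstein : Prop :=
  IsNoetherianRing S ∧ IsNoetherianRing Sᵐᵒᵖ ∧
  (∃ n : ℕ, injDimLe S (ModuleCat.of S S) n) ∧
  (∃ n : ℕ, injDimLe Sᵐᵒᵖ (ModuleCat.of Sᵐᵒᵖ Sᵐᵒᵖ) n)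

end Sides

/-! ### The commutative case -/

section Comm
variable (R : Type u) [CommRing R]

/-- For a commutative ring: exactness of `I ⊗_R C`. -/
def tensExactC (I : ModuleCat.{u} R) (C : Cx R) : Prop :=
  ∀ n : ℤ, Function.Exact
    (LinearMap.lTensor (R := R) (M := I) (C.d (n+1) n).hom)
    (LinearMap.lTensor (R := R) (M := I) (C.d n (n-1)).hom)

/-- An F-totally acyclic complex over a commutative ring: exact, and `I ⊗_R C` is exact
for every injective module `I`. -/
def FTotAcyclicC (C : Cx R) : Prop :=
  IsExactCx R C ∧ ∀ I : ModuleCat.{u} R, Injective I → tensExactC R I C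

/-- A Gorenstein flat module over a commutative ring. -/
def GFlatC (M : ModuleCat.{u} R) : Prop :=
  ∃ C : Cx R, dwIn R (fun F => Module.Flat R F) C ∧ FTotAcyclicC R C ∧ IsCycleOf R C M

/-- A Gorenstein cotorsion module over a commutative ring. -/
def GorCotC (Y : ModuleCat.{u} R) : Prop :=
  ∀ G : ModuleCat.{u} R, GFlatC R G → extVanish R 1 G Y

/-- An exact complex of projectives over a commutative ring which stays exact when
tensored with any injective module. -/
def PGFCxC (C : Cx R) : Prop :=
  dwIn R (fun Q => Projective Q) C ∧ IsExactCx R C ∧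
    ∀ I : ModuleCat.{u} R, Injective I → tensExactC R I C

/-- A projectively coresolved Gorenstein flat module over a commutative ring. -/
def PGFC (M : ModuleCat.{u} R) : Prop := ∃ C : Cx R, PGFCxC R C ∧ IsCycleOf R C M

/-- The character module `M⁺` over a commutative ring, as an `R`-module. -/
def charC (M : ModuleCat.{u} R) : ModuleCat.{u} R := ModuleCat.of R (CharacterModule M)

/-- A coherent commutative ring: every finitely generated ideal is finitely presented. -/
def IsCoherentCommRing : Prop := ∀ I : Ideal R, I.FG → Module.FinitePresentation R I

/-- A commutative noetherian ring is Gorenstein if its self-injective dimension is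
finite. -/
def GorensteinCommRing : Prop :=
  IsNoetherianRing R ∧ ∃ n : ℕ, injDimLe R (ModuleCat.of R R) n

end Comm

end AcyclicGorenstein

end

open AcyclicGorenstein

/-! ### Auxiliary development for statement 16 -/

namespace Statement16Aux

noncomputable section

open AcyclicGorenstein

section CharRight

variable {R : Type u} [Ring R]

/-- Left `R`-module structure on the character module of a right `R`-module. -/
instance instSMulCharR (M : Type u) [AddCommGroup M] [Module Rᵐᵒᵖ M] :
    SMul R (CharMod M) :=
  ⟨fun r χ => (χ : M →+ AddCircle (1:ℚ)).comp
    (DistribMulAction.toAddMonoidHom M (MulOpposite.op r))⟩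

lemma charR_smul_apply {M : Type u} [AddCommGroup M] [Module Rᵐᵒᵖ M] (r : R)
    (χ : CharMod M) (m : M) : (r • χ) m = χ (MulOpposite.op r • m) := rfl

instance instModuleCharR (M : Type u) [AddCommGroup M] [Module Rᵐᵒᵖ M] :
    Module R (CharMod M) where
  one_smul χ := CharMod.ext fun m => by rw [charR_smul_apply]; simp
  mul_smul x y χ := CharMod.ext fun m => by
    simp only [charR_smul_apply, MulOpposite.op_mul, mul_smul]
  smul_zero r := rfl
  smul_add r f g := rfl
  add_smul x y χ := CharMod.ext fun m => by
    show χ (MulOpposite.op (x + y) • m) = (x • χ) m + (y • χ) m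
    rw [MulOpposite.op_add, add_smul, map_add]
    rfl
  zero_smul χ := CharMod.ext fun m => by
    show χ (MulOpposite.op (0 : R) • m) = (0 : CharMod M) m
    simp only [MulOpposite.op_zero, zero_smul]
    show χ 0 = (0 : M →+ AddCircle (1:ℚ)) m
    simp

/-- The character module of a right `R`-module map, as a left `R`-module map. -/
def charMapR {M N : Type u} [AddCommGroup M] [Module Rᵐᵒᵖ M] [AddCommGroup N]
    [Module Rᵐᵒᵖ N] (f : M →ₗ[Rᵐᵒᵖ] N) : CharMod N →ₗ[R] CharMod M where
  toFun χ := (χ : N →+ AddCircle (1:ℚ)).comp f.toAddMonoidHom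
  map_add' _ _ := rfl
  map_smul' r χ := CharMod.ext fun m => by
    show χ (MulOpposite.op r • f m) = χ (f (MulOpposite.op r • m))
    exact (congrArg χ (map_smul f (MulOpposite.op r) m)).symm

lemma charMapR_apply {M N : Type u} [AddCommGroup M] [Module Rᵐᵒᵖ M] [AddCommGroup N]
    [Module Rᵐᵒᵖ N] (f : M →ₗ[Rᵐᵒᵖ] N) (χ : CharMod N) (m : M) :
    charMapR f χ m = χ (f m) := rfl

end CharRight

section CharGeneric

/-- Extension of characters along an injective map. -/
lemma char_extend {A B : Type u} [AddCommGroup A] [AddCommGroup B] (f : A →ₗ[ℤ] B)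
    (hf : Function.Injective f) (χ : A →+ AddCircle (1:ℚ)) :
    ∃ ξ : B →+ AddCircle (1:ℚ), ∀ a, ξ (f a) = χ a := by
  obtain ⟨ξ, hξ⟩ := CharacterModule.dual_surjective_of_injective f hf
    (χ : CharacterModule A)
  exact ⟨ξ, fun a => DFunLike.congr_fun hξ a⟩

/-- Characters detect zero. -/
lemma char_detect {B : Type u} [AddCommGroup B] {b : B}
    (h : ∀ χ : B →+ AddCircle (1:ℚ), χ b = 0) : b = 0 :=
  CharacterModule.eq_zero_of_character_apply (fun c => h c)

/-- Applying characters to an exact sequence yields an exact sequence. -/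
lemma exact_char {A B C' : Type u} [AddCommGroup A] [AddCommGroup B] [AddCommGroup C']
    (f : A →ₗ[ℤ] B) (g : B →ₗ[ℤ] C') (h : Function.Exact f g)
    (χ : B →+ AddCircle (1:ℚ)) (hχ : ∀ a, χ (f a) = 0) :
    ∃ ξ : C' →+ AddCircle (1:ℚ), ∀ b, ξ (g b) = χ b := by
  have hle : LinearMap.ker g ≤ LinearMap.ker χ.toIntLinearMap := by
    intro x hx
    obtain ⟨a, rfl⟩ := (h x).1 (LinearMap.mem_ker.1 hx)
    exact hχ a
  set χ' : (B ⧸ LinearMap.ker g) →ₗ[ℤ] AddCircle (1:ℚ) :=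
    Submodule.liftQ _ χ.toIntLinearMap hle with hχ'
  set χ'' : (LinearMap.range g) →ₗ[ℤ] AddCircle (1:ℚ) :=
    χ' ∘ₗ (g.quotKerEquivRange.symm : LinearMap.range g →ₗ[ℤ] B ⧸ LinearMap.ker g)
    with hχ''
  obtain ⟨ξ, hξ⟩ := char_extend ((LinearMap.range g).subtype)
    (Submodule.injective_subtype _) χ''.toAddMonoidHom
  refine ⟨ξ, fun b => ?_⟩
  have h1 : ξ (g b) = χ'' ⟨g b, ⟨b, rfl⟩⟩ := hξ ⟨g b, ⟨b, rfl⟩⟩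
  rw [h1, hχ'', LinearMap.comp_apply]
  have h2 : g.quotKerEquivRange.symm ⟨g b, ⟨b, rfl⟩⟩ =
      (LinearMap.ker g).mkQ b := g.quotKerEquivRange_symm_apply_image b ⟨b, rfl⟩
  show χ' (g.quotKerEquivRange.symm ⟨g b, ⟨b, rfl⟩⟩) = χ b
  rw [h2]
  simp [hχ', Submodule.mkQ_apply]

/-- Exactness can be detected on characters. -/
lemma exact_of_char {A B C' : Type u} [AddCommGroup A] [AddCommGroup B] [AddCommGroup C']
    (f : A →ₗ[ℤ] B) (g : B →ₗ[ℤ] C')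
    (hz : ∀ a, g (f a) = 0)
    (hlift : ∀ χ : B →+ AddCircle (1:ℚ), (∀ a, χ (f a) = 0) →
      ∃ ξ : C' →+ AddCircle (1:ℚ), ∀ b, ξ (g b) = χ b) :
    Function.Exact f g := by
  intro y
  constructor
  · intro hy
    have hmk : Submodule.Quotient.mk (p := LinearMap.range f) y = 0 := by
      apply char_detect
      intro χ
      have h0 : ∀ a, (χ.comp (LinearMap.range f).mkQ.toAddMonoidHom) (f a) = 0 := by
        intro a
        have hfa : ((LinearMap.range f).mkQ) (f a) = 0 := by
          rw [Submodule.mkQ_apply, Submodule.Quotient.mk_eq_zero]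
          exact ⟨a, rfl⟩
        show χ (((LinearMap.range f).mkQ) (f a)) = 0
        rw [hfa, map_zero]
      obtain ⟨ξ, hξ⟩ := hlift _ h0
      have h3 := hξ y
      rw [hy, map_zero] at h3
      exact h3.symm
    have := (Submodule.Quotient.mk_eq_zero _).1 hmk
    obtain ⟨a, ha⟩ := this
    exact ⟨a, ha⟩
  · rintro ⟨a, rfl⟩
    exact hz a

end CharGeneric

section TensAux

variable {R : Type u} [Ring R] {M : Type u} [AddCommGroup M] [Module Rᵐᵒᵖ M]
  {N : Type u} [AddCommGroup N] [Module R N]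

/-- The image of a simple tensor in the balanced tensor product. -/
def tmk (m : M) (n : N) : Tens R M N := Submodule.Quotient.mk (m ⊗ₜ[ℤ] n)

lemma tmk_add_left (m m' : M) (n : N) :
    (tmk (m + m') n : Tens R M N) = tmk m n + tmk m' n := by
  show Submodule.Quotient.mk _ = Submodule.Quotient.mk _ + Submodule.Quotient.mk _
  rw [TensorProduct.add_tmul]; exact Submodule.Quotient.mk_add (Submodule.span ℤ (trel R M N))

lemma tmk_add_right (m : M) (n n' : N) :
    (tmk m (n + n') : Tens R M N) = tmk m n + tmk m n' := by
  show Submodule.Quotient.mk _ = Submodule.Quotient.mk _ + Submodule.Quotient.mk _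
  rw [TensorProduct.tmul_add]; exact Submodule.Quotient.mk_add (Submodule.span ℤ (trel R M N))

lemma tmk_zero_left (n : N) : (tmk 0 n : Tens R M N) = 0 := by
  show Submodule.Quotient.mk _ = 0
  rw [TensorProduct.zero_tmul]
  rfl

/-- The defining relation of the balanced tensor product. -/
lemma tmk_opsmul (r : R) (m : M) (n : N) :
    (tmk (MulOpposite.op r • m) n : Tens R M N) = tmk m (r • n) := by
  refine (Submodule.Quotient.eq _).2 (Submodule.subset_span ?_)
  exact ⟨r, m, n, rfl⟩

lemma tmapL_tmk {M' : Type u} [AddCommGroup M'] [Module Rᵐᵒᵖ M']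
    (f : M →ₗ[Rᵐᵒᵖ] M') (m : M) (n : N) :
    tmapL f N (tmk m n) = tmk (f m) n := by
  show Submodule.mapQ _ _ _ _ (Submodule.Quotient.mk _) = _
  exact congrArg Submodule.Quotient.mk (TensorProduct.map_tmul _ _ m n)

lemma tmapR_tmk {N' : Type u} [AddCommGroup N'] [Module R N']
    (g : N →ₗ[R] N') (m : M) (n : N) :
    tmapR M g (tmk m n) = tmk m (g n) := by
  show Submodule.mapQ _ _ _ _ (Submodule.Quotient.mk _) = _
  exact congrArg Submodule.Quotient.mk (TensorProduct.map_tmul _ _ m n)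

/-- Two ℤ-linear maps out of the balanced tensor product agreeing on simple tensors
are equal. -/
lemma tens_hom_ext {Q : Type v} [AddCommGroup Q] {φ ψ : Tens R M N →ₗ[ℤ] Q}
    (h : ∀ m n, φ (tmk m n) = ψ (tmk m n)) : φ = ψ := by
  refine Submodule.linearMap_qext _ (TensorProduct.ext' ?_)
  exact h

/-- A linear map into the character module induces a character of the balanced tensor
product. -/
def pairLin (φ : N →ₗ[R] CharMod M) : Tens R M N →ₗ[ℤ] AddCircle (1:ℚ) := by
  refine Submodule.liftQ _ (TensorProduct.lift
    { toFun := fun m =>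
      { toFun := fun n => φ n m
        map_add' := fun n n' => by
          show φ (n + n') m = φ n m + φ n' m
          rw [map_add]; rfl
        map_smul' := fun z n => by
          show φ (z • n) m = (RingHom.id ℤ) z • (φ n m)
          rw [map_zsmul φ z n]
          rfl }
      map_add' := fun m m' => by
        ext n
        exact map_add (φ n) m m'
      map_smul' := fun z m => by
        ext n
        exact map_zsmul (φ n) z m }) ?_
  rw [Submodule.span_le]
  rintro x ⟨r, m, n, rfl⟩
  simp only [SetLike.mem_coe, LinearMap.mem_ker, map_sub, TensorProduct.lift.tmul]
  erw [LinearMap.mem_ker, map_sub, TensorProduct.lift.tmul, TensorProduct.lift.tmul]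
  show φ n (MulOpposite.op r • m) - φ (r • n) m = 0
  rw [map_smul φ r n]
  show φ n (MulOpposite.op r • m) - (r • φ n) m = 0
  rw [charR_smul_apply, sub_self]

lemma pairLin_tmk (φ : N →ₗ[R] CharMod M) (m : M) (n : N) :
    pairLin φ (tmk m n) = φ n m := by
  show Submodule.liftQ _ _ _ (Submodule.Quotient.mk _) = _
  erw [Submodule.liftQ_apply, TensorProduct.lift.tmul]

/-- A character of the balanced tensor product induces a linear map into the character
module. -/
def unpair (χ : Tens R M N →+ AddCircle (1:ℚ)) : N →ₗ[R] CharMod M where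
  toFun n :=
    { toFun := fun m => χ (tmk m n)
      map_zero' := by
        show χ (tmk 0 n) = 0
        rw [tmk_zero_left, map_zero]
      map_add' := fun m m' => by
        show χ (tmk (m + m') n) = χ (tmk m n) + χ (tmk m' n)
        rw [tmk_add_left, map_add] }
  map_add' n n' := CharMod.ext fun m => by
    show χ (tmk m (n + n')) = χ (tmk m n) + χ (tmk m n')
    rw [tmk_add_right, map_add]
  map_smul' r n := CharMod.ext fun m => by
    show χ (tmk m (r • n)) = χ (tmk (MulOpposite.op r • m) n)
    rw [tmk_opsmul]

lemma unpair_apply (χ : Tens R M N →+ AddCircle (1:ℚ)) (n : N) (m : M) :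
    unpair χ n m = χ (tmk m n) := rfl

end TensAux

section FlatChar

variable {R : Type u} [Ring R]

/-- The character module of a flat right module is an injective left module. -/
lemma injective_charMod_of_flat (F : ModuleCat.{u} Rᵐᵒᵖ) (hF : FlatRight R F) :
    CategoryTheory.Injective (ModuleCat.of R (CharMod F)) := by
  suffices hinj : Module.Injective R (CharMod F) by
    exact Module.injective_object_of_injective_module R (CharMod F)
  apply Module.Baer.injective
  intro I φ
  have ht : Function.Injective (tmapR (S := R) (F : Type u) (I.subtype)) :=
    hF (ModuleCat.of R I) (ModuleCat.of R R) I.subtype (Submodule.injective_subtype I)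
  obtain ⟨ξ, hξ⟩ := char_extend (tmapR (S := R) (F : Type u) (I.subtype)) ht
    (pairLin φ).toAddMonoidHom
  refine ⟨unpair ξ, fun x hx => ?_⟩
  refine CharMod.ext fun f => ?_
  show ξ (tmk f x) = φ ⟨x, hx⟩ f
  have h1 : (tmk f x : Tens R F R) =
      tmapR (S := R) (F : Type u) (I.subtype) (tmk f ⟨x, hx⟩) := by
    rw [tmapR_tmk]
    rfl
  rw [h1, hξ]
  show pairLin φ (tmk f ⟨x, hx⟩) = φ ⟨x, hx⟩ f
  rw [pairLin_tmk]

end FlatChar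

section ExtVanish

lemma subsingleton_of_isZero {S : Type v} [Ring S] {M : ModuleCat.{w} S}
    (h : Limits.IsZero M) : Subsingleton M := by
  have h1 : (𝟙 M : M ⟶ M) = 0 := h.eq_of_src _ _
  refine ⟨fun a b => ?_⟩
  have key : ∀ x : M, x = 0 := fun x => by
    have := LinearMap.congr_fun (congrArg ModuleCat.Hom.hom h1) x
    simpa using this
  rw [key a, key b]

variable {T : Type u} [Ring T]

/-- `Ext^1` into an injective module vanishes. -/
lemma extVanish_of_injective (F E : ModuleCat.{u} T)
    (hE : CategoryTheory.Injective E) : extVanish T 1 F E := by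
  haveI := hE
  obtain ⟨P⟩ := (HasProjectiveResolution.out (Z := F))
  have hPex : P.complex.ExactAt 1 := by
    have hsingle : (((ChainComplex.single₀ (ModuleCat.{u} T))).obj F).ExactAt 1 :=
      ChainComplex.exactAt_succ_single_obj F 0
    exact (quasiIsoAt_iff_exactAt' P.π 1 hsingle).1 inferInstance
  rw [HomologicalComplex.exactAt_iff' _ 2 1 0 (by simp) (by simp),
    ShortComplex.moduleCat_exact_iff] at hPex
  have key : ∀ (φ : P.complex.X 1 ⟶ E), P.complex.d 2 1 ≫ φ = 0 →
      ∃ ψ : P.complex.X 0 ⟶ E, P.complex.d 1 0 ≫ ψ = φ := by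
    intro φ hφ
    set d10 : P.complex.X 1 →ₗ[T] P.complex.X 0 := (P.complex.d 1 0).hom with hd10
    have hle : LinearMap.ker d10 ≤ LinearMap.ker φ.hom := by
      intro x hx
      obtain ⟨y, hy⟩ := hPex x (LinearMap.mem_ker.1 hx)
      rw [LinearMap.mem_ker, ← hy]
      have := LinearMap.congr_fun (congrArg ModuleCat.Hom.hom hφ) y
      exact this
    set q := Submodule.liftQ (LinearMap.ker d10) φ.hom hle with hq
    set ψ₀ : (LinearMap.range d10) →ₗ[T] E :=
      q ∘ₗ (d10.quotKerEquivRange.symm :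
        LinearMap.range d10 →ₗ[T] P.complex.X 1 ⧸ LinearMap.ker d10) with hψ₀
    let W0 : ModuleCat.{u} T := ModuleCat.of T (LinearMap.range d10)
    let ι : W0 ⟶ P.complex.X 0 := ModuleCat.ofHom (LinearMap.range d10).subtype
    haveI : Mono ι := ConcreteCategory.mono_of_injective ι (Submodule.injective_subtype _)
    let ψ₀' : W0 ⟶ E := ModuleCat.ofHom ψ₀
    refine ⟨Injective.factorThru ψ₀' ι, ?_⟩
    have hfact := Injective.comp_factorThru ψ₀' ι
    refine ModuleCat.hom_ext (LinearMap.ext fun x => ?_)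
    have h1 : Injective.factorThru ψ₀' ι (d10 x)
        = ψ₀ ⟨d10 x, ⟨x, rfl⟩⟩ :=
      LinearMap.congr_fun (congrArg ModuleCat.Hom.hom hfact) ⟨d10 x, ⟨x, rfl⟩⟩
    show Injective.factorThru ψ₀' ι (d10 x) = φ x
    rw [h1, hψ₀, LinearMap.comp_apply]
    show q (d10.quotKerEquivRange.symm ⟨d10 x, ⟨x, rfl⟩⟩) = φ x
    rw [d10.quotKerEquivRange_symm_apply_image x ⟨x, rfl⟩]
    simp [hq, Submodule.mkQ_apply]
  have hK : (P.complex.linearYonedaObj ℤ E).ExactAt 1 := by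
    rw [HomologicalComplex.exactAt_iff' _ 0 1 2 (by simp) (by simp),
      ShortComplex.moduleCat_exact_iff]
    intro x₂ hx₂
    obtain ⟨ψ, hψ⟩ := key x₂ hx₂
    exact ⟨ψ, hψ⟩
  have hzero : Limits.IsZero ((P.complex.linearYonedaObj ℤ E).homology 1) :=
    (HomologicalComplex.exactAt_iff_isZero_homology _ _).1 hK
  exact subsingleton_of_isZero (Limits.IsZero.of_iso hzero (P.isoExt (R := ℤ) 1 E))

/-- Injective modules are FP-injective. -/
lemma fpInj_of_injective (A : ModuleCat.{u} T) (hA : CategoryTheory.Injective A) :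
    FPInj T A := fun F _ => extVanish_of_injective F A hA

end ExtVanish

section KeyLift

variable {T : Type u} [Ring T]

/-- Key lifting lemma: if `W` is an exact complex of injectives with Ding injective
cycles, then every map from an FP-injective module into a cycle lifts. -/
lemma key_lift (W : Cx T) (hW : IsExactCx T W)
    (hWinj : dwIn T (fun M => CategoryTheory.Injective M) W)
    (hcyc : cyclesIn T (DingInj T) W)
    (A : ModuleCat.{u} T) (hAfp : FPInj T A) :
    homIntoExact T A W := by
  intro n f hf
  have hidx : (n + 1 - 1 : ℤ) = n := by ring
  have rel1 : (ComplexShape.down ℤ).Rel (n+1) n := rfl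
  have rel2 : (ComplexShape.down ℤ).Rel (n+1) (n+1-1) := by
    show (n + 1 - 1) + 1 = n + 1
    ring
  have hdd := W.d_comp_eqToHom rel1 rel2
  have hker : LinearMap.ker (W.d (n+1) (n+1-1)).hom = LinearMap.ker (W.d (n+1) n).hom := by
    rw [hidx]
  have hD' : DingInj T (ModuleCat.of T (LinearMap.ker (W.d (n+1) n).hom)) := by
    obtain ⟨D, hDC, m, ⟨e⟩⟩ := hcyc (n + 1)
    have e' : (LinearMap.ker (W.d (n+1) (n+1-1)).hom) ≃ₗ[T] LinearMap.ker (D.d m (m-1)).hom := e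
    exact ⟨D, hDC, m, ⟨(LinearEquiv.ofEq _ _ hker.symm).trans e'⟩⟩
  obtain ⟨D, ⟨hDinj, hDex, hDhom⟩, m, ⟨e⟩⟩ := hD'
  let B := W.X (n + 1)
  let p : B →ₗ[T] W.X n := (W.d (n + 1) n).hom
  let K : Submodule T B := LinearMap.ker p
  let π : D.X m →ₗ[T] D.X (m - 1) := (D.d m (m - 1)).hom
  -- `e : K ≃ₗ[T] ker π`
  let j' : K →ₗ[T] D.X m :=
    (LinearMap.ker (D.d m (m-1)).hom).subtype ∘ₗ
      (e : ModuleCat.of T (LinearMap.ker (W.d (n+1) n).hom) →ₗ[T] LinearMap.ker (D.d m (m-1)).hom)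
  let j'M : ModuleCat.of T K ⟶ D.X m := ModuleCat.ofHom j'
  let ιK : ModuleCat.of T K ⟶ B := ModuleCat.ofHom K.subtype
  haveI : Mono ιK := ConcreteCategory.mono_of_injective ιK (Submodule.injective_subtype _)
  haveI : CategoryTheory.Injective (D.X m) := hDinj m
  haveI : CategoryTheory.Injective (D.X (m-1)) := hDinj (m-1)
  let hmapM : B ⟶ D.X m := Injective.factorThru j'M ιK
  let hmap : B →ₗ[T] D.X m := hmapM.hom
  have hmapK : ∀ k : K, hmap (k : B) = j' k := fun k =>
    LinearMap.congr_fun (congrArg ModuleCat.Hom.hom (Injective.comp_factorThru j'M ιK)) k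
  have hπj' : ∀ k : K, π (j' k) = 0 := fun k => LinearMap.mem_ker.1 (e k).2
  have hliftle : K ≤ LinearMap.ker (π ∘ₗ (hmap : B →ₗ[T] D.X m)) := by
    intro k hk
    rw [LinearMap.mem_ker, LinearMap.comp_apply]
    rw [show (k : B) = ((⟨k, hk⟩ : K) : B) from rfl, hmapK ⟨k, hk⟩]
    exact hπj' ⟨k, hk⟩
  let q : (B ⧸ K) →ₗ[T] D.X (m-1) :=
    Submodule.liftQ K (π ∘ₗ (hmap : B →ₗ[T] D.X m)) hliftle
  let ψ₀ : (LinearMap.range p) →ₗ[T] D.X (m-1) :=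
    q ∘ₗ (p.quotKerEquivRange.symm : LinearMap.range p →ₗ[T] B ⧸ LinearMap.ker p)
  let Wr : ModuleCat.{u} T := ModuleCat.of T (LinearMap.range p)
  let ιr : Wr ⟶ W.X n := ModuleCat.ofHom (LinearMap.range p).subtype
  haveI : Mono ιr := ConcreteCategory.mono_of_injective ιr (Submodule.injective_subtype _)
  let ψ₀' : Wr ⟶ D.X (m-1) := ModuleCat.ofHom ψ₀
  let ψM : W.X n ⟶ D.X (m-1) := Injective.factorThru ψ₀' ιr
  let ψ : W.X n →ₗ[T] D.X (m-1) := ψM.hom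
  have hψp : ∀ b : B, ψ (p b) = π (hmap b) := by
    intro b
    have h1 : ψ ((LinearMap.range p).subtype ⟨p b, ⟨b, rfl⟩⟩) = ψ₀ ⟨p b, ⟨b, rfl⟩⟩ :=
      LinearMap.congr_fun (congrArg ModuleCat.Hom.hom (Injective.comp_factorThru ψ₀' ιr))
        ⟨p b, ⟨b, rfl⟩⟩
    have h2 : ψ (p b) = ψ₀ ⟨p b, ⟨b, rfl⟩⟩ := h1
    rw [h2]
    show q (p.quotKerEquivRange.symm ⟨p b, ⟨b, rfl⟩⟩) = π (hmap b)
    rw [p.quotKerEquivRange_symm_apply_image b ⟨b, rfl⟩]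
    show q (Submodule.Quotient.mk b) = π (hmap b)
    exact Submodule.liftQ_apply _ _ b
  have hfr : ∀ a : A, f a ∈ LinearMap.range p := by
    intro a
    have h0 : W.d n (n-1) (f a) = 0 := LinearMap.congr_fun hf a
    obtain ⟨b, hb⟩ := (hW n (f a)).1 h0
    exact ⟨b, hb⟩
  have hcond : (D.d (m-1) (m-1-1)).hom ∘ₗ ((ψ : W.X n →ₗ[T] D.X (m-1)) ∘ₗ f) = 0 := by
    refine LinearMap.ext fun a => ?_
    obtain ⟨b, hb⟩ := hfr a
    show D.d (m-1) (m-1-1) (ψ (f a)) = 0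
    rw [← hb, hψp b]
    show D.d (m-1) (m-1-1) (D.d m (m-1) (hmap b)) = 0
    exact LinearMap.congr_fun (congrArg ModuleCat.Hom.hom (D.d_comp_d m (m-1) (m-1-1))) (hmap b)
  have hres := hDhom A hAfp (m-1) ((ψ : W.X n →ₗ[T] D.X (m-1)) ∘ₗ f) hcond
  have hm1 : (m - 1 + 1 : ℤ) = m := by ring
  rw [hm1] at hres
  obtain ⟨g₀, hg₀⟩ := hres
  -- the pullback submodule
  let σ : (W.X n × D.X m) →ₗ[T] (W.X (n-1) × D.X (m-1)) :=
    LinearMap.prod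
      ((W.d n (n-1)).hom ∘ₗ LinearMap.fst T (W.X n) (D.X m))
      ((π ∘ₗ LinearMap.snd T (W.X n) (D.X m)) -
        ((ψ : W.X n →ₗ[T] D.X (m-1)) ∘ₗ LinearMap.fst T (W.X n) (D.X m)))
  let P : Submodule T (W.X n × D.X m) := LinearMap.ker σ
  have hmemP : ∀ x : W.X n × D.X m,
      x ∈ P ↔ (W.d n (n-1) x.1 = 0 ∧ π x.2 - ψ x.1 = 0) := by
    intro x
    constructor
    · intro hx
      have h1 : σ x = 0 := hx
      exact ⟨congrArg Prod.fst h1, congrArg Prod.snd h1⟩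
    · intro hx
      show σ x = 0
      have : σ x = (W.d n (n-1) x.1, π x.2 - ψ x.1) := rfl
      rw [this, hx.1, hx.2]
      rfl
  let Φ₀ : B →ₗ[T] (W.X n × D.X m) := LinearMap.prod p (hmap : B →ₗ[T] D.X m)
  have hΦmem : ∀ b : B, Φ₀ b ∈ P := by
    intro b
    rw [hmemP]
    constructor
    · show W.d n (n-1) (p b) = 0
      exact LinearMap.congr_fun (congrArg ModuleCat.Hom.hom (W.d_comp_d (n+1) n (n-1))) b
    · show π (hmap b) - ψ (p b) = 0
      rw [hψp b, sub_self]
  let Φ : B →ₗ[T] P := Φ₀.codRestrict P hΦmem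
  have hΦinj : Function.Injective Φ := by
    intro b b' h
    have h0 : Φ₀ b = Φ₀ b' := congrArg Subtype.val h
    have hpb : p b = p b' := congrArg Prod.fst h0
    have hhb : hmap b = hmap b' := congrArg Prod.snd h0
    have hk : b - b' ∈ K := by
      rw [LinearMap.mem_ker, map_sub, hpb, sub_self]
    have h1 : j' ⟨b - b', hk⟩ = 0 := by
      rw [← hmapK ⟨b - b', hk⟩]
      show hmap (b - b') = 0
      rw [map_sub, hhb, sub_self]
    have h2 : e ⟨b - b', hk⟩ = 0 := by
      apply Subtype.ext
      exact h1
    have h3 : (⟨b - b', hk⟩ : K) = (0 : K) := by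
      apply e.injective
      rw [h2, map_zero]
    have h4 : b - b' = 0 := congrArg Subtype.val h3
    exact sub_eq_zero.mp h4
  have hΦsurj : Function.Surjective Φ := by
    rintro ⟨⟨z, ee⟩, hmem⟩
    rw [hmemP] at hmem
    obtain ⟨hz, hee⟩ := hmem
    obtain ⟨b, hb⟩ := (hW n z).1 hz
    replace hb : p b = z := hb
    have hker : ee - hmap b ∈ LinearMap.ker (D.d m (m-1)).hom := by
      rw [LinearMap.mem_ker, map_sub]
      show π ee - π (hmap b) = 0
      rw [← hψp b, hb]
      exact hee
    set k : K := e.symm ⟨ee - hmap b, hker⟩ with hkdef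
    refine ⟨b + (k : B), ?_⟩
    apply Subtype.ext
    show Φ₀ (b + (k : B)) = (z, ee)
    have hpk : p (k : B) = 0 := k.2
    have hhk : hmap (k : B) = ee - hmap b := by
      rw [hmapK k]
      show ((e k : LinearMap.ker (D.d m (m-1)).hom) : D.X m) = ee - hmap b
      rw [hkdef, e.apply_symm_apply]
    have hfst : p (b + (k : B)) = z := by rw [map_add, hpk, add_zero, hb]
    have hsnd : hmap (b + (k : B)) = ee := by
      rw [map_add, hhk]
      abel
    show (p (b + (k : B)), hmap (b + (k : B))) = (z, ee)
    rw [hfst, hsnd]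
  let Φeq : B ≃ₗ[T] P := LinearEquiv.ofBijective Φ ⟨hΦinj, hΦsurj⟩
  have hγmem : ∀ a : A, ((f a, g₀ a) : W.X n × D.X m) ∈ P := by
    intro a
    rw [hmemP]
    refine ⟨LinearMap.congr_fun hf a, ?_⟩
    show π (g₀ a) - ψ (f a) = 0
    have := LinearMap.congr_fun hg₀ a
    rw [show π (g₀ a) = ψ (f a) from this, sub_self]
  let γ : A →ₗ[T] P :=
    (LinearMap.prod (f : A →ₗ[T] W.X n) g₀).codRestrict P hγmem
  refine ⟨(Φeq.symm : P →ₗ[T] B) ∘ₗ γ, ?_⟩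
  refine LinearMap.ext fun a => ?_
  show p (Φeq.symm (γ a)) = f a
  have h1 : Φ (Φeq.symm (γ a)) = γ a := Φeq.apply_symm_apply (γ a)
  have h2 : Φ₀ (Φeq.symm (γ a)) = (f a, g₀ a) := congrArg Subtype.val h1
  exact congrArg Prod.fst h2

end KeyLift

section IndexJuggle

variable {T : Type u} [Ring T]

/-- Two differentials out of the same object have the same kernel elements. -/
lemma d_eq_zero_iff (W : Cx T) {i j j' : ℤ} (h : j + 1 = i) (h' : j' + 1 = i)
    (x : W.X i) : W.d i j x = 0 ↔ W.d i j' x = 0 := by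
  have rel1 : (ComplexShape.down ℤ).Rel i j := h
  have rel2 : (ComplexShape.down ℤ).Rel i j' := h'
  have hdd := W.d_comp_eqToHom rel1 rel2
  constructor
  · intro hx
    have h2 : eqToHom (congrArg W.X ((ComplexShape.down ℤ).next_eq rel2 rel1))
        (W.d i j' x) = 0 := by
      show (W.d i j' ≫ eqToHom _) x = 0
      rw [hdd]
      exact hx
    have h4 : (eqToHom (congrArg W.X ((ComplexShape.down ℤ).next_eq rel2 rel1)) ≫
        eqToHom (congrArg W.X ((ComplexShape.down ℤ).next_eq rel2 rel1)).symm)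
        (W.d i j' x) = 0 := by
      show eqToHom (congrArg W.X ((ComplexShape.down ℤ).next_eq rel2 rel1)).symm
        (eqToHom (congrArg W.X ((ComplexShape.down ℤ).next_eq rel2 rel1))
          (W.d i j' x)) = 0
      rw [h2, map_zero]
    rw [eqToHom_trans, eqToHom_refl] at h4
    exact h4
  · intro hx
    rw [← hdd]
    show eqToHom (congrArg W.X ((ComplexShape.down ℤ).next_eq rel2 rel1))
      (W.d i j' x) = 0
    rw [hx, map_zero]

/-- Exactness of a complex, with flexible spelling of the indices. -/
lemma isExactCx_at {W : Cx T} (hW : IsExactCx T W) {a b c : ℤ}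
    (hab : b + 1 = a) (hbc : c + 1 = b) :
    Function.Exact (W.d a b) (W.d b c) := by
  subst hab
  subst hbc
  intro y
  rw [d_eq_zero_iff W (by ring) (show (c+1-1) + 1 = c + 1 by ring) y]
  exact hW (c + 1) y

/-- `homIntoExact`, with flexible spelling of the indices. -/
lemma homInto_elim {E : ModuleCat.{u} T} {W : Cx T} (hhom : homIntoExact T E W)
    {a b c : ℤ} (hab : b + 1 = a) (hbc : c + 1 = b) :
    ∀ f : E →ₗ[T] W.X b, (W.d b c).hom ∘ₗ f = 0 →
      ∃ g : E →ₗ[T] W.X a, (W.d a b).hom ∘ₗ g = f := by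
  subst hab
  subst hbc
  intro f hf
  have hf' : (W.d (c+1) (c+1-1)).hom ∘ₗ f = 0 := by
    refine LinearMap.ext fun i => ?_
    show W.d (c+1) (c+1-1) (f i) = 0
    rw [← d_eq_zero_iff W (show c + 1 = c + 1 from rfl)
      (show (c+1-1) + 1 = c + 1 by ring) (f i)]
    exact LinearMap.congr_fun hf i
  obtain ⟨g, hg⟩ := hhom (c+1) f hf'
  exact ⟨g, hg⟩

/-- Cast between components of a complex along an index equality. -/
def castC (W : Cx T) {i j : ℤ} (h : i = j) : W.X i ≃ₗ[T] W.X j :=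
  h ▸ LinearEquiv.refl T (W.X i)

lemma castC_d (W : Cx T) {i j i' j' : ℤ} (hi : i = i') (hj : j = j') (x : W.X i) :
    castC W hj (W.d i j x) = W.d i' j' (castC W hi x) := by
  subst hi
  subst hj
  rfl

lemma castC_cancel (W : Cx T) {i j : ℤ} (h : i = j) (h' : j = i) (x : W.X i) :
    castC W h' (castC W h x) = x := by
  subst h
  rfl

end IndexJuggle

section CharCx

variable {R : Type u} [Ring R]

/-- Characters of an exact sequence of right modules form an exact sequence. -/
lemma charMapR_exact {M1 M2 M3 : Type u} [AddCommGroup M1] [Module Rᵐᵒᵖ M1]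
    [AddCommGroup M2] [Module Rᵐᵒᵖ M2] [AddCommGroup M3] [Module Rᵐᵒᵖ M3]
    (f : M1 →ₗ[Rᵐᵒᵖ] M2) (g : M2 →ₗ[Rᵐᵒᵖ] M3) (hfg : Function.Exact f g) :
    Function.Exact (charMapR (R := R) g) (charMapR (R := R) f) := by
  intro χ
  constructor
  · intro hχ
    have hχ' : ∀ a, χ (f a) = 0 := fun a => DFunLike.congr_fun hχ a
    have hfg' : Function.Exact (f.toAddMonoidHom.toIntLinearMap)
        (g.toAddMonoidHom.toIntLinearMap) := hfg
    obtain ⟨ξ, hξ⟩ := exact_char (f.toAddMonoidHom.toIntLinearMap)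
      (g.toAddMonoidHom.toIntLinearMap) hfg' (χ : M2 →+ AddCircle (1:ℚ)) hχ'
    refine ⟨(ξ : CharMod M3), ?_⟩
    exact CharMod.ext fun b => hξ b
  · rintro ⟨ξ, rfl⟩
    refine CharMod.ext fun a => ?_
    show ξ (g (f a)) = 0
    rw [hfg.apply_apply_eq_zero a, map_zero]

variable (R) in
/-- The character complex of a complex of right modules, as a complex of left
modules. -/
def charCx (C : Cx Rᵐᵒᵖ) : Cx R where
  X k := ModuleCat.of R (CharMod (C.X (-k)))
  d i j := ModuleCat.ofHom (charMapR (C.d (-j) (-i)).hom)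
  shape i j hij := by
    have h0 : C.d (-j) (-i) = 0 := by
      apply C.shape
      show ¬ (-i) + 1 = -j
      intro hc
      exact hij (show j + 1 = i by omega)
    refine ModuleCat.hom_ext (LinearMap.ext fun (χ : CharMod (C.X (-i))) => ?_)
    refine CharMod.ext fun mm => ?_
    show χ ((C.d (-j) (-i)).hom mm) = 0
    rw [h0, ModuleCat.hom_zero, LinearMap.zero_apply, map_zero]
  d_comp_d' i j k hij hjk := by
    refine ModuleCat.hom_ext (LinearMap.ext fun (χ : CharMod (C.X (-i))) => ?_)
    refine CharMod.ext fun mm => ?_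
    show χ ((C.d (-j) (-i)).hom ((C.d (-k) (-j)).hom mm)) = 0
    rw [show (C.d (-j) (-i)).hom ((C.d (-k) (-j)).hom mm) = 0 from
      LinearMap.congr_fun (congrArg ModuleCat.Hom.hom (C.d_comp_d (-k) (-j) (-i))) mm, map_zero]

lemma charCx_exact (C : Cx Rᵐᵒᵖ) (hC : IsExactCx Rᵐᵒᵖ C) :
    IsExactCx R (charCx R C) := by
  intro k
  show Function.Exact (charMapR (R := R) (C.d (-k) (-(k+1))).hom)
    (charMapR (R := R) (C.d (-(k-1)) (-k)).hom)
  exact charMapR_exact _ _ (isExactCx_at hC (by ring) (by ring))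

lemma charCx_inj (C : Cx Rᵐᵒᵖ) (hflat : dwIn Rᵐᵒᵖ (FlatRight R) C) :
    dwIn R (fun M => CategoryTheory.Injective M) (charCx R C) := by
  intro k
  exact injective_charMod_of_flat (C.X (-k)) (hflat (-k))

end CharCx

end

end Statement16Aux

/-- over a coherent ring, if every exact complex of injective left
modules has all cycles Ding injective, then every exact complex of flat right modules
is F-totally acyclic. -/
theorem statement_16 (R : Type u) [Ring R] (hcoh : IsCoherentRing R)
    (h : ∀ C : Cx R, IsExactCx R C → dwIn R (fun M => Injective M) C →
      cyclesIn R (DingInj R) C) :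
    ∀ C : Cx Rᵐᵒᵖ, IsExactCx Rᵐᵒᵖ C → dwIn Rᵐᵒᵖ (FlatRight R) C → FTotAcyclicR R C := by
  classical
  intro C hCex hCflat
  refine ⟨hCex, ?_⟩
  intro I hI
  set W : Cx R := Statement16Aux.charCx R C with hWdef
  have hWex : IsExactCx R W := Statement16Aux.charCx_exact C hCex
  have hWinj : dwIn R (fun M => Injective M) W := Statement16Aux.charCx_inj C hCflat
  have hcyc : cyclesIn R (DingInj R) W := h W hWex hWinj
  have hIfp : FPInj R I := Statement16Aux.fpInj_of_injective I hI
  have hhom : homIntoExact R I W := Statement16Aux.key_lift W hWex hWinj hcyc I hIfp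
  intro n
  apply Statement16Aux.exact_of_char
  · intro a
    have hcomp : (tmapL (C.d n (n-1)).hom (I : Type u)) ∘ₗ
        (tmapL (C.d (n+1) n).hom (I : Type u)) = 0 := by
      apply Statement16Aux.tens_hom_ext
      intro m i
      show tmapL (C.d n (n-1)).hom (I : Type u)
        (tmapL (C.d (n+1) n).hom (I : Type u) (Statement16Aux.tmk m i)) = 0
      rw [Statement16Aux.tmapL_tmk, Statement16Aux.tmapL_tmk]
      rw [show (C.d n (n-1)).hom ((C.d (n+1) n).hom m) = 0 from
        LinearMap.congr_fun (congrArg ModuleCat.Hom.hom (C.d_comp_d (n+1) n (n-1))) m]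
      exact Statement16Aux.tmk_zero_left i
    exact LinearMap.congr_fun hcomp a
  · intro χ hχ
    set φ := Statement16Aux.unpair χ with hφdef
    have hnn : (-(-n) : ℤ) = n := by ring
    have h4 : (n : ℤ) = -(-n) := by ring
    have hup : (-(-n-1) : ℤ) = n + 1 := by ring
    have hmm1 : (n - 1 : ℤ) = -(-n+1) := by ring
    set φ' : (I : Type u) →ₗ[R] CharMod (C.X (-(-n))) :=
      (Statement16Aux.charMapR (R := R) ((Statement16Aux.castC C hnn).toLinearMap))
        ∘ₗ φ with hφ'def
    have hcond : (W.d (-n) (-n-1)).hom ∘ₗ φ' = 0 := by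
      refine LinearMap.ext fun i => ?_
      refine CharMod.ext fun (x : C.X (-(-n-1))) => ?_
      show φ i (Statement16Aux.castC C hnn (C.d (-(-n-1)) (-(-n)) x)) = 0
      rw [Statement16Aux.castC_d C hup hnn x]
      show χ (Statement16Aux.tmk ((C.d (n+1) n).hom (Statement16Aux.castC C hup x)) i) = 0
      rw [← Statement16Aux.tmapL_tmk (C.d (n+1) n).hom]
      exact hχ _
    obtain ⟨g, hg⟩ := Statement16Aux.homInto_elim hhom
      (show (-n : ℤ) + 1 = -n+1 from rfl) (show (-n-1 : ℤ) + 1 = -n by ring) φ' hcond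
    let g' : (I : Type u) →ₗ[R] CharMod (C.X (-(-n+1))) := g
    set ψ : (I : Type u) →ₗ[R] CharMod (C.X (n-1)) :=
      (Statement16Aux.charMapR (R := R) ((Statement16Aux.castC C hmm1).toLinearMap))
        ∘ₗ g' with hψdef
    refine ⟨(Statement16Aux.pairLin ψ).toAddMonoidHom, ?_⟩
    intro b
    have hfin : (Statement16Aux.pairLin ψ) ∘ₗ (tmapL (C.d n (n-1)).hom (I : Type u)) =
        χ.toIntLinearMap := by
      apply Statement16Aux.tens_hom_ext
      intro x i
      show Statement16Aux.pairLin ψ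
        (tmapL (C.d n (n-1)).hom (I : Type u) (Statement16Aux.tmk x i)) =
        χ (Statement16Aux.tmk x i)
      rw [Statement16Aux.tmapL_tmk, Statement16Aux.pairLin_tmk]
      show g' i (Statement16Aux.castC C hmm1 (C.d n (n-1) x)) =
        χ (Statement16Aux.tmk x i)
      rw [Statement16Aux.castC_d C h4 hmm1 x]
      have h5 : (Statement16Aux.charMapR (R := R) (C.d (-(-n)) (-(-n+1))).hom (g' i)
          : CharMod (C.X (-(-n)))) = φ' i := LinearMap.congr_fun hg i
      have h6 := DFunLike.congr_fun h5 (Statement16Aux.castC C h4 x)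
      calc g' i (C.d (-(-n)) (-(-n+1)) (Statement16Aux.castC C h4 x))
          = φ i (Statement16Aux.castC C hnn (Statement16Aux.castC C h4 x)) := h6
        _ = φ i x := by rw [Statement16Aux.castC_cancel]
        _ = χ (Statement16Aux.tmk x i) := rfl
    exact DFunLike.congr_fun hfin b
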